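/- Suppose α₁, α₂, α₃, α₄ are real constants, n ≥ 2, g is a positive definite metric on ℝⁿ, and for all (1,1)-tensors t in a nonempty open subset of ℝ^{n×n}, the identity α₁ g_{ti} g^{lj} δ^m_r δ^v_n + α₂ g_{ni} g^{mj} δ^l_r δ^v_t + α₃ t̄^m_n t̄^j_i δ^l_r δ^v_t + α₄ t̄^l_t t̄^j_i δ^m_r δ^v_n = 0 holds for all indices, where t̄^j_i = g^{jh} g_{ik} t^k_h. Then the four expressions g_{ti}g^{lj}δ^m_rδ^v_n, g_{ni}g^{mj}δ^l_rδ^v_t, t̄^m_n t̄^j_i δ^l_rδ^v_t, t̄^l_t t̄^j_i δ^m_rδ^v_n are linearly independent as functions of (t, indices), i.e., α₁ = α₂ = α₃ = α₄ = 0. -/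

import Mathlib

/-- Kronecker delta. -/
def kdelta {n : ℕ} (i j : Fin n) : ℝ := if i = j then 1 else 0

/-- `t̄^j_i = g^{jh} g_{ik} t^k_h`. -/
noncomputable def tbar {n : ℕ} (g : Matrix (Fin n) (Fin n) ℝ) (t : Matrix (Fin n) (Fin n) ℝ)
    (j i : Fin n) : ℝ :=
  ∑ h : Fin n, ∑ k : Fin n, g⁻¹ j h * g i k * t k h

/-- Lemma 1 in full index form: if the identity
`α₁ g_{ti} g^{lj} δ^m_r δ^v_n + α₂ g_{ni} g^{mj} δ^l_r δ^v_t
  + α₃ t̄^m_n t̄^j_i δ^l_r δ^v_t + α₄ t̄^l_t t̄^j_i δ^m_r δ^v_n = 0`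
holds for all `t` in a nonempty open set and all indices, then
`α₁ = α₂ = α₃ = α₄ = 0`. -/
lemma diag_pos {n : ℕ} {g : Matrix (Fin n) (Fin n) ℝ} (hg : g.PosDef) (i : Fin n) : 0 < g i i := by
  have := hg.dotProduct_mulVec_pos (x := Pi.single i 1) (fun hc => one_ne_zero (α := ℝ) (by simpa using congrFun hc i))
  simpa [dotProduct, Matrix.mulVec, Pi.single_apply, Finset.sum_ite_eq,
    Finset.sum_ite_eq'] using this

lemma tbar_basis {n : ℕ} {g : Matrix (Fin n) (Fin n) ℝ} (hg : g.PosDef) (p q j i : Fin n) :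
    tbar g (fun k h => g⁻¹ k p * g q h) j i = (if j = q then 1 else 0) * (if i = p then 1 else 0) := by
  have hdet : IsUnit g.det := isUnit_iff_ne_zero.mpr hg.det_pos.ne'
  have h1 : g * g⁻¹ = 1 := Matrix.mul_nonsing_inv g hdet
  have h2 : g⁻¹ * g = 1 := Matrix.nonsing_inv_mul g hdet
  have hsym : ∀ a b, g a b = g b a := fun a b => by have := hg.1.apply b a; simpa using this
  have key : tbar g (fun k h => g⁻¹ k p * g q h) j i
      = (∑ k, g i k * g⁻¹ k p) * (∑ h, g⁻¹ j h * g q h) := by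
    rw [Finset.sum_mul_sum]
    unfold tbar
    rw [Finset.sum_comm]
    refine Finset.sum_congr rfl fun k _ => Finset.sum_congr rfl fun h _ => by ring
  have e1 : (∑ k, g i k * g⁻¹ k p) = (g * g⁻¹) i p := by rw [Matrix.mul_apply]
  have e2 : (∑ h, g⁻¹ j h * g q h) = (g⁻¹ * g) j q := by
    rw [Matrix.mul_apply]; exact Finset.sum_congr rfl fun h _ => by rw [hsym q h]
  rw [key, e1, e2, h1, h2, Matrix.one_apply, Matrix.one_apply, mul_comm]

lemma tbar_lin {n : ℕ} (g t A B : Matrix (Fin n) (Fin n) ℝ) (a b : ℝ) (j i : Fin n) :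
    tbar g (t + a • A + b • B) j i = tbar g t j i + a * tbar g A j i + b * tbar g B j i := by
  unfold tbar
  rw [Finset.mul_sum, Finset.mul_sum, ← Finset.sum_add_distrib, ← Finset.sum_add_distrib]
  refine Finset.sum_congr rfl fun h _ => ?_
  rw [Finset.mul_sum, Finset.mul_sum, ← Finset.sum_add_distrib, ← Finset.sum_add_distrib]
  refine Finset.sum_congr rfl fun k _ => ?_
  simp only [Matrix.add_apply, Matrix.smul_apply, smul_eq_mul]
  ring

theorem stmt14 (n : ℕ) (hn : 2 ≤ n)
    (g : Matrix (Fin n) (Fin n) ℝ) (hg : g.PosDef)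
    (α₁ α₂ α₃ α₄ : ℝ)
    (U : Set (Matrix (Fin n) (Fin n) ℝ)) (hU : IsOpen U) (hne : U.Nonempty)
    (h : ∀ t ∈ U, ∀ t' i l j m r v n' : Fin n,
      α₁ * g t' i * g⁻¹ l j * kdelta m r * kdelta v n'
        + α₂ * g n' i * g⁻¹ m j * kdelta l r * kdelta v t'
        + α₃ * tbar g t m n' * tbar g t j i * kdelta l r * kdelta v t'
        + α₄ * tbar g t l t' * tbar g t j i * kdelta m r * kdelta v n' = 0) :
    α₁ = 0 ∧ α₂ = 0 ∧ α₃ = 0 ∧ α₄ = 0 := by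
  obtain ⟨t₀, ht₀⟩ := hne
  set i0 : Fin n := ⟨0, by omega⟩
  set i1 : Fin n := ⟨1, by omega⟩
  have hne01 : i0 ≠ i1 := by simp [i0, i1, Fin.ext_iff]
  have hk0 : kdelta i0 i1 = 0 := by simp [kdelta, hne01]
  have hk0' : kdelta i1 i0 = 0 := by simp [kdelta, hne01.symm]
  have hk00 : kdelta i0 i0 = 1 := by simp [kdelta]
  have hk11 : kdelta i1 i1 = 1 := by simp [kdelta]
  -- perturbation matrices
  set A : Matrix (Fin n) (Fin n) ℝ := fun k h => g⁻¹ k i0 * g i0 h with hA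
  set B : Matrix (Fin n) (Fin n) ℝ := fun k h => g⁻¹ k i1 * g i1 h with hB
  have hA00 : tbar g A i0 i0 = 1 := by rw [hA, tbar_basis hg]; simp
  have hA11 : tbar g A i1 i1 = 0 := by rw [hA, tbar_basis hg]; simp [hne01.symm]
  have hB00 : tbar g B i0 i0 = 0 := by rw [hB, tbar_basis hg]; simp [hne01]
  have hB11 : tbar g B i1 i1 = 1 := by rw [hB, tbar_basis hg]; simp
  -- find ρ > 0 with all four perturbed matrices in U
  have hF : Continuous (fun p : ℝ × ℝ => t₀ + p.1 • A + p.2 • B) := by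
    exact ((continuous_const.add (continuous_fst.smul continuous_const)).add
      (continuous_snd.smul continuous_const))
  have hopen : IsOpen ((fun p : ℝ × ℝ => t₀ + p.1 • A + p.2 • B) ⁻¹' U) := hU.preimage hF
  have h00mem : ((0 : ℝ), (0 : ℝ)) ∈ (fun p : ℝ × ℝ => t₀ + p.1 • A + p.2 • B) ⁻¹' U := by
    simpa using ht₀
  obtain ⟨r, hr, hball⟩ := Metric.isOpen_iff.mp hopen _ h00mem
  set ρ := r / 2 with hρ
  have hρpos : 0 < ρ := by positivity
  have hmem : ∀ e d : ℝ, |e| ≤ ρ → |d| ≤ ρ → t₀ + e • A + d • B ∈ U := by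
    intro e d he hd
    have hmb : (e, d) ∈ Metric.ball ((0:ℝ), (0:ℝ)) r := by
      simp only [Metric.mem_ball, Prod.dist_eq, Real.dist_eq, sub_zero]
      exact max_lt (lt_of_le_of_lt he (by linarith)) (lt_of_le_of_lt hd (by linarith))
    exact hball hmb
  set a := tbar g t₀ i0 i0 with ha
  set b := tbar g t₀ i1 i1 with hb
  have hP : ∀ e d : ℝ, |e| ≤ ρ → |d| ≤ ρ →
      tbar g (t₀ + e • A + d • B) i0 i0 = a + e ∧
      tbar g (t₀ + e • A + d • B) i1 i1 = b + d := by
    intro e d he hd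
    constructor
    · rw [tbar_lin, hA00, hB00]; ring
    · rw [tbar_lin, hA11, hB11]; ring
  -- Equation for (α₂, α₃): for t ∈ U, α₂ K₂ + α₃ * tbar t i0 i0 * tbar t i1 i1 = 0
  have E23 : ∀ t ∈ U, α₂ * g i0 i1 * g⁻¹ i0 i1 + α₃ * tbar g t i0 i0 * tbar g t i1 i1 = 0 := by
    intro t ht
    have := h t ht i0 i1 i1 i1 i0 i1 i0 i0
    rw [hk0, hk00, hk11] at this
    linarith [this]
  -- Equation for (α₁, α₄)
  have E14 : ∀ t ∈ U, α₁ * g i0 i1 * g⁻¹ i0 i1 + α₄ * tbar g t i0 i0 * tbar g t i1 i1 = 0 := by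
    intro t ht
    have := h t ht i0 i1 i0 i1 i1 i1 i0 i0
    rw [hk0, hk00, hk11] at this
    linarith [this]
  have habs0 : |(0:ℝ)| ≤ ρ := by rw [abs_zero]; linarith
  have habsρ : |ρ| ≤ ρ := by rw [abs_of_pos hρpos]
  -- derive α₃ = 0 and α₄ = 0 via the four-point trick
  have hprod : ∀ β K : ℝ, (∀ t ∈ U, K + β * tbar g t i0 i0 * tbar g t i1 i1 = 0) → β = 0 := by
    intro β K hE
    have e00 := hE _ (hmem 0 0 habs0 habs0)
    have eρ0 := hE _ (hmem ρ 0 habsρ habs0)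
    have e0ρ := hE _ (hmem 0 ρ habs0 habsρ)
    have eρρ := hE _ (hmem ρ ρ habsρ habsρ)
    rw [(hP 0 0 habs0 habs0).1, (hP 0 0 habs0 habs0).2] at e00
    rw [(hP ρ 0 habsρ habs0).1, (hP ρ 0 habsρ habs0).2] at eρ0
    rw [(hP 0 ρ habs0 habsρ).1, (hP 0 ρ habs0 habsρ).2] at e0ρ
    rw [(hP ρ ρ habsρ habsρ).1, (hP ρ ρ habsρ habsρ).2] at eρρ
    have : β * ρ * ρ = 0 := by nlinarith [e00, eρ0, e0ρ, eρρ]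
    have hρne : ρ ≠ 0 := ne_of_gt hρpos
    rcases mul_eq_zero.mp this with h' | h'
    · rcases mul_eq_zero.mp h' with h'' | h''
      · exact h''
      · exact absurd h'' hρne
    · exact absurd h' hρne
  have hα₃ : α₃ = 0 := hprod α₃ _ E23
  have hα₄ : α₄ = 0 := hprod α₄ _ E14
  -- now kill α₂ and α₁ using diagonal entries
  have hgpos := diag_pos hg i0
  have hginv : g⁻¹.PosDef := hg.inv
  have hgipos := diag_pos hginv i0
  have hα₂ : α₂ = 0 := by
    have := h t₀ ht₀ i0 i0 i1 i0 i0 i1 i0 i0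
    rw [hk0, hk00, hk11] at this
    have h2 : α₂ * g i0 i0 * g⁻¹ i0 i0 = 0 := by
      rw [hα₃] at this; linarith [this]
    have := mul_ne_zero (ne_of_gt hgpos) (ne_of_gt hgipos)
    rcases mul_eq_zero.mp (by linarith [h2] : α₂ * (g i0 i0 * g⁻¹ i0 i0) = 0) with h' | h'
    · exact h'
    · exact absurd h' this
  have hα₁ : α₁ = 0 := by
    have := h t₀ ht₀ i0 i0 i0 i0 i1 i1 i1 i1
    simp only [hk0, hk0', hk11, mul_zero, zero_mul, mul_one, add_zero, zero_add] at this
    have h1 : α₁ * g i0 i0 * g⁻¹ i0 i0 = 0 := by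
      rw [hα₄] at this; linarith [this]
    have := mul_ne_zero (ne_of_gt hgpos) (ne_of_gt hgipos)
    rcases mul_eq_zero.mp (by linarith [h1] : α₁ * (g i0 i0 * g⁻¹ i0 i0) = 0) with h' | h'
    · exact h'
    · exact absurd h' this
  exact ⟨hα₁, hα₂, hα₃, hα₄⟩
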